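/- arXiv:2002.11364 — 2 statements merged into one kernel-verified Lean document; each statement's English description precedes it below -/
import Mathlib

section
/- Let f : ℝ^d → ℝ be convex and differentiable with minimizer x*, let ω ≥ 0, η > 0, x^k ∈ ℝ^d, and let C be an ω-compression operator. For the one-step CGD update x^{k+1} = x^k − η C(∇f(x^k)), it holds that E[‖x^{k+1} − x*‖²] ≤ ‖x^k − x*‖² − 2η (f(x^k) − f(x*)) + η² (1+ω) ‖∇f(x^k)‖², where the expectation is over the randomness of C. -/
open MeasureTheory

local notation "⟪" x ", " y "⟫" => @inner ℝ _ _ x y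

lemma convex_grad_ineq {d : ℕ}
    (f : EuclideanSpace ℝ (Fin d) → ℝ)
    (hconv : ConvexOn ℝ Set.univ f) (hdiff : Differentiable ℝ f)
    (x y : EuclideanSpace ℝ (Fin d)) :
    f x + ⟪gradient f x, y - x⟫ ≤ f y := by
  set v := y - x with hv
  set g : ℝ → ℝ := fun t => f (x + t • v) with hg
  have hgc : ConvexOn ℝ Set.univ g := by
    have := hconv.comp_affineMap
      (AffineMap.lineMap (x : EuclideanSpace ℝ (Fin d)) y)
    have heq : (f ∘ AffineMap.lineMap (x : EuclideanSpace ℝ (Fin d)) y) = g := by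
      funext t
      simp [g, AffineMap.lineMap_apply_module, v]
      ring_nf
      congr 1
      module
    rw [heq] at this
    simpa using this
  have h1 : HasDerivAt (fun t : ℝ => x + t • v) v 0 := by
    simpa using ((hasDerivAt_id (0 : ℝ)).smul_const v).const_add x
  have h2 : HasFDerivAt f (InnerProductSpace.toDual ℝ _ (gradient f x)) x :=
    ((hdiff x).hasGradientAt : HasGradientAt f (gradient f x) x)
  have h3 : HasDerivAt g ⟪gradient f x, v⟫ 0 := by
    have h2' : HasFDerivAt f (InnerProductSpace.toDual ℝ _ (gradient f x))
        ((fun t : ℝ => x + t • v) 0) := by simpa using h2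
    have := h2'.comp_hasDerivAt 0 h1
    simpa [g, InnerProductSpace.toDual_apply_apply, Function.comp_def] using this
  have h4 := hgc.le_slope_of_hasDerivAt (Set.mem_univ (0 : ℝ)) (Set.mem_univ (1 : ℝ))
    zero_lt_one h3
  have h5 : slope g 0 1 = f y - f x := by
    simp [slope, g, v]
  rw [h5] at h4
  linarith

theorem cgd_one_step_distance {d : ℕ}
    (f : EuclideanSpace ℝ (Fin d) → ℝ)
    (hconv : ConvexOn ℝ Set.univ f) (hdiff : Differentiable ℝ f)
    (xstar : EuclideanSpace ℝ (Fin d)) (hmin : ∀ x, f xstar ≤ f x)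
    (om η : ℝ) (hom : 0 ≤ om) (hη : 0 < η)
    {Ω : Type*} [MeasureSpace Ω] [IsProbabilityMeasure (volume : Measure Ω)]
    (C : Ω → EuclideanSpace ℝ (Fin d) → EuclideanSpace ℝ (Fin d))
    (hCint : ∀ v, Integrable (fun ω => C ω v))
    (hCmean : ∀ v, (∫ ω, C ω v) = v)
    (hCsqint : ∀ v, Integrable (fun ω => ‖C ω v - v‖ ^ 2))
    (hCvar : ∀ v, (∫ ω, ‖C ω v - v‖ ^ 2) ≤ om * ‖v‖ ^ 2)
    (xk : EuclideanSpace ℝ (Fin d)) (xnext : Ω → EuclideanSpace ℝ (Fin d))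
    (hx : ∀ ω, xnext ω = xk - η • C ω (gradient f xk)) :
    (∫ ω, ‖xnext ω - xstar‖ ^ 2)
      ≤ ‖xk - xstar‖ ^ 2 - 2 * η * (f xk - f xstar)
        + η ^ 2 * (1 + om) * ‖gradient f xk‖ ^ 2 := by
  set g : EuclideanSpace ℝ (Fin d) := gradient f xk with hgdef
  set a : EuclideanSpace ℝ (Fin d) := xk - xstar with hadef
  set c : Ω → EuclideanSpace ℝ (Fin d) := fun ω => C ω g with hcdef
  have hc : Integrable c := hCint g
  -- integrability of ‖c‖²
  have hptsq : ∀ ω, ‖c ω‖ ^ 2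
      = ‖c ω - g‖ ^ 2 + 2 * ⟪c ω - g, g⟫ + ‖g‖ ^ 2 := by
    intro ω
    have := norm_add_sq_real (c ω - g) g
    simpa using this
  have hsqint : Integrable (fun ω => ‖c ω‖ ^ 2) := by
    have : Integrable (fun ω => ‖c ω - g‖ ^ 2 + 2 * ⟪c ω - g, g⟫ + ‖g‖ ^ 2) :=
      (((hCsqint g).add ((((hc.sub (integrable_const g)).inner_const g)).const_mul 2)).add
        (integrable_const _))
    exact this.congr (Filter.Eventually.of_forall fun ω => (hptsq ω).symm)
  -- pointwise expansion
  have hpt : ∀ ω, ‖xnext ω - xstar‖ ^ 2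
      = ‖a‖ ^ 2 - 2 * η * ⟪a, c ω⟫ + η ^ 2 * ‖c ω‖ ^ 2 := by
    intro ω
    have h1 : xnext ω - xstar = a - η • c ω := by
      rw [hx ω, hadef, hcdef]; module
    rw [h1, norm_sub_sq_real, real_inner_smul_right, norm_smul]
    simp [mul_pow, abs_of_pos hη]
    ring
  -- integral of inner term
  have hinner : (∫ ω, ⟪a, c ω⟫) = ⟪a, g⟫ := by
    rw [integral_inner hc, hCmean g]
  -- integral of ‖c‖²
  have hsq : (∫ ω, ‖c ω‖ ^ 2) ≤ (1 + om) * ‖g‖ ^ 2 := by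
    have hzero : (∫ ω, c ω - g) = 0 := by
      rw [integral_sub hc (integrable_const g), hCmean g, integral_const]
      simp
    have hinner0 : (∫ ω, ⟪c ω - g, g⟫) = 0 := by
      have : (∫ ω, ⟪g, c ω - g⟫) = ⟪g, (0 : EuclideanSpace ℝ (Fin d))⟫ := by
        rw [← hzero]
        exact integral_inner (hc.sub (integrable_const g)) g
      simp only [inner_zero_right] at this
      rw [← this]
      congr 1; funext ω; exact real_inner_comm _ _
    calc (∫ ω, ‖c ω‖ ^ 2)
        = (∫ ω, ‖c ω - g‖ ^ 2 + 2 * ⟪c ω - g, g⟫ + ‖g‖ ^ 2) := by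
          congr 1; funext ω; exact hptsq ω
      _ = (∫ ω, ‖c ω - g‖ ^ 2) + 2 * (∫ ω, ⟪c ω - g, g⟫) + ‖g‖ ^ 2 := by
          have hB : Integrable (fun ω => 2 * ⟪c ω - g, g⟫) := by
            exact ((hc.sub (integrable_const g)).inner_const g).const_mul 2
          have hA : Integrable (fun ω => ‖c ω - g‖ ^ 2 + 2 * ⟪c ω - g, g⟫) := by
            exact (hCsqint g).add hB
          rw [integral_add hA (integrable_const _),
            integral_add (hCsqint g) hB, integral_const_mul, integral_const]
          simp [c]
      _ = (∫ ω, ‖c ω - g‖ ^ 2) + ‖g‖ ^ 2 := by rw [hinner0]; ring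
      _ ≤ om * ‖g‖ ^ 2 + ‖g‖ ^ 2 := by linarith [hCvar g]
      _ = (1 + om) * ‖g‖ ^ 2 := by ring
  -- convexity
  have hconvineq : f xk - f xstar ≤ ⟪a, g⟫ := by
    have := convex_grad_ineq f hconv hdiff xk xstar
    have h2 : ⟪g, xstar - xk⟫ = -⟪a, g⟫ := by
      rw [real_inner_comm]
      rw [show xstar - xk = -a by rw [hadef]; abel, inner_neg_left]
    rw [h2] at this
    linarith
  -- put it together
  have hLHS : (∫ ω, ‖xnext ω - xstar‖ ^ 2)
      = ‖a‖ ^ 2 - 2 * η * ⟪a, g⟫ + η ^ 2 * (∫ ω, ‖c ω‖ ^ 2) := by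
    calc (∫ ω, ‖xnext ω - xstar‖ ^ 2)
        = (∫ ω, ‖a‖ ^ 2 - 2 * η * ⟪a, c ω⟫ + η ^ 2 * ‖c ω‖ ^ 2) := by
          congr 1; funext ω; exact hpt ω
      _ = ‖a‖ ^ 2 - 2 * η * (∫ ω, ⟪a, c ω⟫) + η ^ 2 * (∫ ω, ‖c ω‖ ^ 2) := by
          have hB : Integrable (fun ω => 2 * η * ⟪a, c ω⟫) := by
            exact (hc.const_inner a).const_mul (2 * η)
          have hA : Integrable (fun ω => ‖a‖ ^ 2 - 2 * η * ⟪a, c ω⟫) := by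
            exact (integrable_const _).sub hB
          have hC2 : Integrable (fun ω => η ^ 2 * ‖c ω‖ ^ 2) := by
            exact hsqint.const_mul _
          rw [integral_add hA hC2, integral_sub (integrable_const _) hB,
            integral_const_mul, integral_const_mul, integral_const]
          simp
      _ = ‖a‖ ^ 2 - 2 * η * ⟪a, g⟫ + η ^ 2 * (∫ ω, ‖c ω‖ ^ 2) := by rw [hinner]
  rw [hLHS]
  have h1 : η ^ 2 * (∫ ω, ‖c ω‖ ^ 2) ≤ η ^ 2 * ((1 + om) * ‖g‖ ^ 2) :=
    mul_le_mul_of_nonneg_left hsq (sq_nonneg η)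
  nlinarith [hconvineq, h1]
end

section
/- Let f_1, …, f_n : ℝ^d → ℝ be convex and differentiable with L-Lipschitz continuous gradients, let f = (1/n)∑_{i=1}^n f_i be μ-strongly convex (μ ≥ 0), let ψ : ℝ^d → ℝ be convex, and P = f + ψ. Let x ∈ ℝ^d, 0 < η ≤ 1/(2L), let g be a square-integrable random vector with E[g] = ∇f(x), and let the random point y⁺ satisfy y⁺ = x − η g − η Δ for some random Δ with ψ(u) ≥ ψ(y⁺) + ⟨Δ, u − y⁺⟩ for all u ∈ ℝ^d. Then for every u ∈ ℝ^d: E[P(y⁺)] ≤ P(u) − (1/η) E[⟨x − y⁺, u − x⟩] + (η/2) E[‖∇f(x) − g‖²] − (1/(4η)) E[‖y⁺ − x‖²] − max{ (μ/2)‖u − x‖², (1/(2Ln)) ∑_{i=1}^n ‖∇f_i(u) − ∇f_i(x)‖² }. -/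
open MeasureTheory RealInnerProductSpace

section Aux

variable {E : Type*} [NormedAddCommGroup E] [InnerProductSpace ℝ E] [CompleteSpace E]

lemma aux_hasDerivAt_line {h : E → ℝ} (hd : Differentiable ℝ h) (a v : E) (t : ℝ) :
    HasDerivAt (fun s : ℝ => h (a + s • v)) ⟪gradient h (a + t • v), v⟫ t := by
  have hline : HasDerivAt (fun s : ℝ => a + s • v) v t := by
    simpa using ((hasDerivAt_id t).smul_const v).const_add a
  have hf : HasFDerivAt h (InnerProductSpace.toDual ℝ E (gradient h (a + t • v))) (a + t • v) :=
    hasGradientAt_iff_hasFDerivAt.mp (hd _).hasGradientAt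
  simpa [InnerProductSpace.toDual_apply_apply, Function.comp_def] using hf.comp_hasDerivAt t hline

lemma aux_gradient_cont {h : E → ℝ} {L : ℝ} (hL : 0 ≤ L)
    (hlip : ∀ p q, ‖gradient h p - gradient h q‖ ≤ L * ‖p - q‖) :
    Continuous (gradient h) := by
  refine (LipschitzWith.of_dist_le_mul (K := L.toNNReal) fun p q => ?_).continuous
  simpa [dist_eq_norm, Real.coe_toNNReal L hL] using hlip p q

/-- Descent lemma. -/
lemma aux_descent {h : E → ℝ} (hd : Differentiable ℝ h) {L : ℝ} (hL : 0 ≤ L)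
    (hlip : ∀ p q, ‖gradient h p - gradient h q‖ ≤ L * ‖p - q‖) (a b : E) :
    h b ≤ h a + ⟪gradient h a, b - a⟫ + L / 2 * ‖b - a‖ ^ 2 := by
  set v := b - a with hv
  have hcont : Continuous fun t : ℝ => ⟪gradient h (a + t • v), v⟫ := by
    exact ((aux_gradient_cont hL hlip).comp (by continuity)).inner continuous_const
  have key : h b - h a = ∫ t in (0:ℝ)..1, ⟪gradient h (a + t • v), v⟫ := by
    have := intervalIntegral.integral_eq_sub_of_hasDerivAt
      (f := fun s : ℝ => h (a + s • v)) (f' := fun t => ⟪gradient h (a + t • v), v⟫)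
      (a := 0) (b := 1)
      (fun t _ => aux_hasDerivAt_line hd a v t) (hcont.intervalIntegrable 0 1)
    rw [this]
    norm_num [hv]
  have mono : ∫ t in (0:ℝ)..1, ⟪gradient h (a + t • v), v⟫
      ≤ ∫ t in (0:ℝ)..1, (⟪gradient h a, v⟫ + L * ‖v‖ ^ 2 * t) := by
    apply intervalIntegral.integral_mono_on (by norm_num) (hcont.intervalIntegrable 0 1)
      ((continuous_const.add (continuous_const.mul continuous_id')).intervalIntegrable 0 1)
    intro t ht
    rcases Set.mem_Icc.mp ht with ⟨ht0, ht1⟩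
    have h1 : ⟪gradient h (a + t • v), v⟫ - ⟪gradient h a, v⟫
        = ⟪gradient h (a + t • v) - gradient h a, v⟫ := by
      rw [inner_sub_left]
    have h2 : ⟪gradient h (a + t • v) - gradient h a, v⟫ ≤ L * ‖v‖ ^ 2 * t := by
      calc ⟪gradient h (a + t • v) - gradient h a, v⟫
          ≤ ‖gradient h (a + t • v) - gradient h a‖ * ‖v‖ := real_inner_le_norm _ _
        _ ≤ (L * ‖a + t • v - a‖) * ‖v‖ := by
            have := hlip (a + t • v) a
            have hvn : (0:ℝ) ≤ ‖v‖ := norm_nonneg _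
            nlinarith [norm_nonneg (gradient h (a + t • v) - gradient h a)]
        _ = L * ‖v‖ ^ 2 * t := by
            simp [add_sub_cancel_left, norm_smul, abs_of_nonneg ht0]
            ring
    show _ ≤ ⟪gradient h a, v⟫ + L * ‖v‖ ^ 2 * t
    linarith
  have hval : ∫ t in (0:ℝ)..1, (⟪gradient h a, v⟫ + L * ‖v‖ ^ 2 * t)
      = ⟪gradient h a, v⟫ + L / 2 * ‖v‖ ^ 2 := by
    rw [intervalIntegral.integral_add (f := fun _ => ⟪gradient h a, v⟫)
      (g := fun t : ℝ => L * ‖v‖ ^ 2 * t) ((continuous_const (y := ⟪gradient h a, v⟫)).intervalIntegrable 0 1)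
      ((continuous_const.mul continuous_id').intervalIntegrable 0 1 :
        IntervalIntegrable (fun t : ℝ => L * ‖v‖ ^ 2 * t) MeasureTheory.volume 0 1)]
    rw [intervalIntegral.integral_const_mul, integral_id, intervalIntegral.integral_const]
    norm_num
    ring
  rw [hval] at mono
  linarith [key ▸ mono]

/-- First-order condition for a convex differentiable function. -/
lemma aux_grad_le {h : E → ℝ} (hc : ConvexOn ℝ Set.univ h) (hd : Differentiable ℝ h) (a b : E) :
    h a + ⟪gradient h a, b - a⟫ ≤ h b := by
  set v := b - a with hv
  have hφconv : ConvexOn ℝ Set.univ (h ∘ (AffineMap.lineMap a b : ℝ →ᵃ[ℝ] E)) := by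
    simpa using hc.comp_affineMap (AffineMap.lineMap a b)
  have hfun : (h ∘ (AffineMap.lineMap a b : ℝ →ᵃ[ℝ] E)) = fun t : ℝ => h (a + t • v) := by
    funext t
    simp only [Function.comp_apply, AffineMap.lineMap_apply, hv, vsub_eq_sub, vadd_eq_add]
    rw [add_comm]
  have hderiv : HasDerivAt (h ∘ (AffineMap.lineMap a b : ℝ →ᵃ[ℝ] E)) ⟪gradient h a, v⟫ 0 := by
    rw [hfun]
    simpa using aux_hasDerivAt_line hd a v 0
  have := hφconv.le_slope_of_hasDerivAt (Set.mem_univ (0:ℝ)) (Set.mem_univ (1:ℝ))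
    one_pos hderiv
  rw [slope_def_field] at this
  simp only [Function.comp_apply, AffineMap.lineMap_apply_one, AffineMap.lineMap_apply_zero] at this
  have h1 : (h b - h a) / (1 - 0) = h b - h a := by norm_num
  rw [h1] at this
  linarith


lemma aux_hasGradientAt_sub_inner {h : E → ℝ} (hd : Differentiable ℝ h) (c z : E) :
    HasGradientAt (fun w => h w - ⟪c, w⟫) (gradient h z - c) z := by
  have h1 : HasFDerivAt h (InnerProductSpace.toDual ℝ E (gradient h z)) z :=
    hasGradientAt_iff_hasFDerivAt.mp (hd z).hasGradientAt
  have h2 : HasFDerivAt (fun w : E => ⟪c, w⟫) (InnerProductSpace.toDual ℝ E c) z := by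
    have := (InnerProductSpace.toDual ℝ E c).hasFDerivAt (x := z)
    apply this.congr_of_eventuallyEq
    filter_upwards with w
    simp [InnerProductSpace.toDual_apply_apply]
  have h3 := h1.sub h2
  rw [← map_sub] at h3
  exact hasGradientAt_iff_hasFDerivAt.mpr h3

/-- Cocoercivity-type bound for convex functions with Lipschitz gradient. -/
lemma aux_cocoercive {h : E → ℝ} (hc : ConvexOn ℝ Set.univ h) (hd : Differentiable ℝ h)
    {L : ℝ} (hL : 0 < L)
    (hlip : ∀ p q, ‖gradient h p - gradient h q‖ ≤ L * ‖p - q‖) (a b : E) :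
    h a + ⟪gradient h a, b - a⟫ + 1 / (2 * L) * ‖gradient h b - gradient h a‖ ^ 2 ≤ h b := by
  set c := gradient h a with hc_def
  set φ : E → ℝ := fun w => h w - ⟪c, w⟫ with hφ
  have hφg : ∀ z, HasGradientAt φ (gradient h z - c) z := fun z =>
    aux_hasGradientAt_sub_inner hd c z
  have hφgrad : ∀ z, gradient φ z = gradient h z - c := fun z => (hφg z).gradient
  have hφd : Differentiable ℝ φ := fun z => (hφg z).differentiableAt
  have hφconv : ConvexOn ℝ Set.univ φ := by
    refine ⟨convex_univ, fun p _ q _ s t hs ht hst => ?_⟩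
    have h1 := hc.2 (Set.mem_univ p) (Set.mem_univ q) hs ht hst
    have hin : ⟪c, s • p + t • q⟫ = s * ⟪c, p⟫ + t * ⟪c, q⟫ := by
      rw [inner_add_right, real_inner_smul_right, real_inner_smul_right]
    simp only [hφ, smul_eq_mul] at *
    rw [hin]
    nlinarith [h1]
  have hφlip : ∀ p q, ‖gradient φ p - gradient φ q‖ ≤ L * ‖p - q‖ := by
    intro p q; rw [hφgrad p, hφgrad q, sub_sub_sub_cancel_right]; exact hlip p q
  set w := gradient h b - c with hw
  have key1 : φ a ≤ φ (b - L⁻¹ • w) := by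
    have h1 := aux_grad_le hφconv hφd a (b - L⁻¹ • w)
    have hz : gradient φ a = 0 := by rw [hφgrad a, ← hc_def, sub_self]
    rw [hz] at h1
    simpa using h1
  have key2 : φ (b - L⁻¹ • w) ≤ φ b - 1 / (2 * L) * ‖w‖ ^ 2 := by
    have h1 := aux_descent hφd hL.le hφlip b (b - L⁻¹ • w)
    have e1 : (b - L⁻¹ • w) - b = -(L⁻¹ • w) := by abel
    rw [e1, hφgrad b, ← hw] at h1
    have e2 : ⟪w, -(L⁻¹ • w)⟫ = -(L⁻¹ * ‖w‖ ^ 2) := by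
      rw [inner_neg_right, real_inner_smul_right, real_inner_self_eq_norm_sq]
    have e3 : ‖-(L⁻¹ • w)‖ ^ 2 = L⁻¹ ^ 2 * ‖w‖ ^ 2 := by
      rw [norm_neg, norm_smul, Real.norm_eq_abs, abs_of_nonneg (inv_nonneg.mpr hL.le), mul_pow]
    rw [e2, e3] at h1
    have harith : φ b + -(L⁻¹ * ‖w‖ ^ 2) + L / 2 * (L⁻¹ ^ 2 * ‖w‖ ^ 2)
        = φ b - 1 / (2 * L) * ‖w‖ ^ 2 := by
      field_simp
      ring
    linarith
  have hkey := key1.trans key2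
  have hinner : ⟪c, b⟫ - ⟪c, a⟫ = ⟪c, b - a⟫ := (inner_sub_right c b a).symm
  simp only [hφ] at hkey
  rw [hw] at hkey ⊢ -- ?
  linarith

end Aux

set_option maxHeartbeats 2000000 in
theorem prox_one_step_bound {d n : ℕ} (hn : 0 < n)
    (L μ : ℝ) (hL : 0 < L) (hμ : 0 ≤ μ)
    (fi : Fin n → EuclideanSpace ℝ (Fin d) → ℝ)
    (hconv : ∀ i, ConvexOn ℝ Set.univ (fi i))
    (hdiff : ∀ i, Differentiable ℝ (fi i))
    (hlip : ∀ i x y, ‖gradient (fi i) x - gradient (fi i) y‖ ≤ L * ‖x - y‖)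
    (f : EuclideanSpace ℝ (Fin d) → ℝ)
    (hf : ∀ x, f x = (1 / (n : ℝ)) * ∑ i, fi i x)
    (hsc : ∀ x y, μ / 2 * ‖x - y‖ ^ 2 ≤ f x - f y - ⟪gradient f y, x - y⟫)
    (ψ : EuclideanSpace ℝ (Fin d) → ℝ) (hψ : ConvexOn ℝ Set.univ ψ)
    (P : EuclideanSpace ℝ (Fin d) → ℝ) (hP : ∀ x, P x = f x + ψ x)
    (x : EuclideanSpace ℝ (Fin d))
    (η : ℝ) (hη0 : 0 < η) (hηL : η ≤ 1 / (2 * L))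
    {Ω : Type*} [MeasureSpace Ω] [IsProbabilityMeasure (volume : Measure Ω)]
    (g : Ω → EuclideanSpace ℝ (Fin d))
    (hgint : Integrable g)
    (hgmean : (∫ ω, g ω) = gradient f x)
    (hgsq : Integrable (fun ω => ‖gradient f x - g ω‖ ^ 2))
    (yplus Δ : Ω → EuclideanSpace ℝ (Fin d))
    (hyp : ∀ ω, yplus ω = x - η • g ω - η • Δ ω)
    (hΔ : ∀ ω u, ψ (yplus ω) + ⟪Δ ω, u - yplus ω⟫ ≤ ψ u)
    (u : EuclideanSpace ℝ (Fin d)) :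
    (∫ ω, P (yplus ω))
      ≤ P u - 1 / η * (∫ ω, ⟪x - yplus ω, u - x⟫)
        + η / 2 * (∫ ω, ‖gradient f x - g ω‖ ^ 2)
        - 1 / (4 * η) * (∫ ω, ‖yplus ω - x‖ ^ 2)
        - max (μ / 2 * ‖u - x‖ ^ 2)
            (1 / (2 * L * n) * ∑ i, ‖gradient (fi i) u - gradient (fi i) x‖ ^ 2) := by
  classical
  have hn' : (0:ℝ) < n := Nat.cast_pos.mpr hn
  -- gradient of f
  have hfgrad : ∀ z, HasGradientAt f ((1/(n:ℝ)) • ∑ i, gradient (fi i) z) z := by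
    intro z
    have h2 : HasFDerivAt (fun w => ∑ i, fi i w)
        (∑ i, InnerProductSpace.toDual ℝ (EuclideanSpace ℝ (Fin d)) (gradient (fi i) z)) z :=
      HasFDerivAt.fun_sum fun i _ => hasGradientAt_iff_hasFDerivAt.mp ((hdiff i z).hasGradientAt)
    have h3 := h2.const_mul (1/(n:ℝ))
    have h4 : HasFDerivAt f
        ((1/(n:ℝ)) • ∑ i, InnerProductSpace.toDual ℝ (EuclideanSpace ℝ (Fin d)) (gradient (fi i) z)) z := by
      apply h3.congr_of_eventuallyEq
      filter_upwards with w
      rw [hf w]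
    have h5 := hasFDerivAt_iff_hasGradientAt.mp h4
    simpa [gradient] using h5
  have hfg : ∀ z, gradient f z = (1/(n:ℝ)) • ∑ i, gradient (fi i) z :=
    fun z => (hfgrad z).gradient
  have hdf : Differentiable ℝ f := fun z => (hfgrad z).differentiableAt
  have hflip : ∀ p q : EuclideanSpace ℝ (Fin d), ‖gradient f p - gradient f q‖ ≤ L * ‖p - q‖ := by
    intro p q
    rw [hfg p, hfg q, ← smul_sub, ← Finset.sum_sub_distrib, norm_smul]
    calc ‖(1/(n:ℝ))‖ * ‖∑ i, (gradient (fi i) p - gradient (fi i) q)‖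
        ≤ (1/(n:ℝ)) * ∑ i, ‖gradient (fi i) p - gradient (fi i) q‖ := by
          rw [Real.norm_eq_abs, abs_of_nonneg (by positivity)]
          exact mul_le_mul_of_nonneg_left (norm_sum_le _ _) (by positivity)
      _ ≤ (1/(n:ℝ)) * ∑ _i : Fin n, L * ‖p - q‖ :=
          mul_le_mul_of_nonneg_left (Finset.sum_le_sum fun i _ => hlip i p q) (by positivity)
      _ = L * ‖p - q‖ := by
          rw [Finset.sum_const, Finset.card_fin, nsmul_eq_mul]
          field_simp
  -- the max bound
  set M := max (μ / 2 * ‖u - x‖ ^ 2)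
      (1 / (2 * L * (n:ℝ)) * ∑ i, ‖gradient (fi i) u - gradient (fi i) x‖ ^ 2) with hM_def
  have hmax : M ≤ f u - f x - ⟪gradient f x, u - x⟫ := by
    have hB1 : μ / 2 * ‖u - x‖ ^ 2 ≤ f u - f x - ⟪gradient f x, u - x⟫ := hsc u x
    have hsum : ∑ i, fi i x + ⟪∑ i, gradient (fi i) x, u - x⟫
        + 1/(2*L) * ∑ i, ‖gradient (fi i) u - gradient (fi i) x‖ ^ 2 ≤ ∑ i, fi i u := by
      have h1 : ∑ i, (fi i x + ⟪gradient (fi i) x, u - x⟫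
          + 1/(2*L) * ‖gradient (fi i) u - gradient (fi i) x‖ ^ 2) ≤ ∑ i, fi i u :=
        Finset.sum_le_sum fun i _ => aux_cocoercive (hconv i) (hdiff i) hL (hlip i) x u
      rw [Finset.sum_add_distrib, Finset.sum_add_distrib, ← sum_inner, ← Finset.mul_sum] at h1
      exact h1
    have hB2 : 1 / (2 * L * (n:ℝ)) * ∑ i, ‖gradient (fi i) u - gradient (fi i) x‖ ^ 2
        ≤ f u - f x - ⟪gradient f x, u - x⟫ := by
      have e3 : ⟪gradient f x, u - x⟫ = (1/(n:ℝ)) * ⟪∑ i, gradient (fi i) x, u - x⟫ := by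
        rw [hfg x, real_inner_smul_left]
      have hmul := mul_le_mul_of_nonneg_left hsum (by positivity : (0:ℝ) ≤ 1/(n:ℝ))
      have e4 : (1/(n:ℝ)) * (∑ i, fi i x + ⟪∑ i, gradient (fi i) x, u - x⟫
          + 1/(2*L) * ∑ i, ‖gradient (fi i) u - gradient (fi i) x‖ ^ 2)
          = (1/(n:ℝ)) * ∑ i, fi i x + (1/(n:ℝ)) * ⟪∑ i, gradient (fi i) x, u - x⟫
          + 1/(2*L*(n:ℝ)) * ∑ i, ‖gradient (fi i) u - gradient (fi i) x‖ ^ 2 := by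
        field_simp
      rw [e4] at hmul
      rw [hf x, hf u] at *
      linarith [hmul, e3]
    exact max_le hB1 hB2
  -- scalar bounds on step size
  have h2Lη : η * (2 * L) ≤ 1 := by
    rw [le_div_iff₀ (by positivity)] at hηL
    exact hηL
  -- Ω is nonempty
  have hΩne : Nonempty Ω := by
    by_contra hcon
    have h1 : (volume : Measure Ω) Set.univ = 1 := measure_univ
    rw [Set.univ_eq_empty_iff.mpr (not_nonempty_iff.mp hcon)] at h1
    simp at h1
  obtain ⟨ω₀⟩ := hΩne
  -- nonexpansiveness
  have hne : ∀ ω ω', ‖yplus ω - yplus ω'‖ ≤ η * ‖g ω - g ω'‖ := by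
    intro ω ω'
    have hmono : 0 ≤ ⟪yplus ω - yplus ω', Δ ω - Δ ω'⟫ := by
      have h1 := hΔ ω (yplus ω')
      have h2 := hΔ ω' (yplus ω)
      have e2 : ⟪Δ ω, yplus ω' - yplus ω⟫ = - ⟪Δ ω, yplus ω - yplus ω'⟫ := by
        rw [← inner_neg_right]; congr 1; abel
      have e5 : ⟪yplus ω - yplus ω', Δ ω - Δ ω'⟫
          = ⟪Δ ω, yplus ω - yplus ω'⟫ - ⟪Δ ω', yplus ω - yplus ω'⟫ := by
        rw [real_inner_comm, inner_sub_left]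
      rw [e5]
      linarith [h1, h2, e2]
    have hYdeq : yplus ω - yplus ω' = -(η • (g ω - g ω')) - η • (Δ ω - Δ ω') := by
      rw [hyp ω, hyp ω']
      simp only [smul_sub]
      abel
    have hsq : ‖yplus ω - yplus ω'‖ ^ 2
        ≤ η * (‖yplus ω - yplus ω'‖ * ‖g ω - g ω'‖) := by
      have h1 : ‖yplus ω - yplus ω'‖ ^ 2 = ⟪yplus ω - yplus ω', yplus ω - yplus ω'⟫ :=
        (real_inner_self_eq_norm_sq _).symm
      have h2 : ⟪yplus ω - yplus ω', yplus ω - yplus ω'⟫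
          = -(η * ⟪yplus ω - yplus ω', g ω - g ω'⟫)
            - η * ⟪yplus ω - yplus ω', Δ ω - Δ ω'⟫ := by
        nth_rewrite 2 [hYdeq]
        rw [inner_sub_right, inner_neg_right, real_inner_smul_right, real_inner_smul_right]
      have h3 : -(‖yplus ω - yplus ω'‖ * ‖g ω - g ω'‖)
          ≤ ⟪yplus ω - yplus ω', g ω - g ω'⟫ := by
        have ha := abs_real_inner_le_norm (yplus ω - yplus ω') (g ω - g ω')
        have hb := neg_abs_le ⟪yplus ω - yplus ω', g ω - g ω'⟫
        linarith
      nlinarith [hmono, hη0.le, mul_le_mul_of_nonneg_left h3 hη0.le]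
    by_cases hz : ‖yplus ω - yplus ω'‖ = 0
    · rw [hz]; positivity
    · have hpos : 0 < ‖yplus ω - yplus ω'‖ := lt_of_le_of_ne (norm_nonneg _) (Ne.symm hz)
      nlinarith [hsq, hpos]
  have hwd : ∀ ω ω', g ω = g ω' → yplus ω = yplus ω' := by
    intro ω ω' hgeq
    have h1 := hne ω ω'
    rw [hgeq, sub_self, norm_zero, mul_zero] at h1
    exact sub_eq_zero.mp (norm_le_zero_iff.mp h1)
  -- measurability of yplus
  have hcoord : ∀ (v : EuclideanSpace ℝ (Fin d)) (i : Fin d), |v i| ≤ ‖v‖ := by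
    intro v i
    calc |v i| = Real.sqrt ((v i) ^ 2) := (Real.sqrt_sq_eq_abs _).symm
      _ ≤ Real.sqrt (∑ j, ‖v j‖ ^ 2) := Real.sqrt_le_sqrt (by
          have h1 := Finset.single_le_sum (f := fun j => ‖v j‖ ^ 2)
            (fun j _ => by positivity) (Finset.mem_univ i)
          simpa [Real.norm_eq_abs, sq_abs] using h1)
      _ = ‖v‖ := (EuclideanSpace.norm_eq v).symm
  set Fc : EuclideanSpace ℝ (Fin d) → (Fin d → ℝ) :=
    fun a => if hex : ∃ ω, g ω = a then (fun i => yplus hex.choose i) else 0 with hFc_def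
  have hFc : ∀ ω, Fc (g ω) = fun i => yplus ω i := by
    intro ω
    have hex : ∃ ω', g ω' = g ω := ⟨ω, rfl⟩
    simp only [hFc_def, dif_pos hex]
    rw [hwd hex.choose ω hex.choose_spec]
  have hFlip : LipschitzOnWith η.toNNReal Fc (Set.range g) := by
    apply LipschitzOnWith.of_dist_le_mul
    rintro p ⟨ω1, rfl⟩ q ⟨ω2, rfl⟩
    rw [hFc ω1, hFc ω2]
    have hb : dist (fun i => yplus ω1 i) (fun i => yplus ω2 i) ≤ ‖yplus ω1 - yplus ω2‖ := by
      rw [dist_pi_le_iff (norm_nonneg _)]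
      intro i
      rw [Real.dist_eq]
      exact hcoord (yplus ω1 - yplus ω2) i
    calc dist (fun i => yplus ω1 i) (fun i => yplus ω2 i)
        ≤ ‖yplus ω1 - yplus ω2‖ := hb
      _ ≤ η * ‖g ω1 - g ω2‖ := hne ω1 ω2
      _ = η.toNNReal * dist (g ω1) (g ω2) := by
          rw [dist_eq_norm, Real.coe_toNNReal η hη0.le]
  obtain ⟨Gc, hGlip, hGeq⟩ := hFlip.extend_pi
  have hyG : ∀ ω, yplus ω = (EuclideanSpace.equiv (Fin d) ℝ).symm (Gc (g ω)) := by
    intro ω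
    have h1 : Gc (g ω) = fun i => yplus ω i := by rw [← hGeq ⟨ω, rfl⟩, hFc ω]
    apply (EuclideanSpace.equiv (Fin d) ℝ).injective
    rw [ContinuousLinearEquiv.apply_symm_apply, h1]
    rfl
  have hymeas : AEStronglyMeasurable yplus (volume : Measure Ω) := by
    have hcontG : Continuous fun a => (EuclideanSpace.equiv (Fin d) ℝ).symm (Gc a) :=
      (EuclideanSpace.equiv (Fin d) ℝ).symm.continuous.comp hGlip.continuous
    have h1 := hcontG.comp_aestronglyMeasurable hgint.aestronglyMeasurable
    exact h1.congr (Filter.Eventually.of_forall fun ω => (hyG ω).symm)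
  -- integrability facts
  have hgnorm : Integrable (fun ω => ‖g ω‖) := hgint.norm
  have hgsqint : Integrable (fun ω => ‖g ω‖ ^ 2) := by
    apply Integrable.mono' ((hgsq.const_mul 2).add (integrable_const (2*‖gradient f x‖^2)))
    · exact ((continuous_norm.pow 2)).comp_aestronglyMeasurable hgint.aestronglyMeasurable
    · filter_upwards with ω
      have h1 : ‖g ω‖ ≤ ‖gradient f x‖ + ‖gradient f x - g ω‖ := by
        calc ‖g ω‖ = ‖gradient f x - (gradient f x - g ω)‖ := by congr 1; abel
          _ ≤ ‖gradient f x‖ + ‖gradient f x - g ω‖ := norm_sub_le _ _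
      rw [Real.norm_eq_abs, abs_of_nonneg (by positivity)]
      simp only [Pi.add_apply]
      nlinarith [norm_nonneg (gradient f x - g ω), norm_nonneg (g ω), norm_nonneg (gradient f x),
        mul_self_le_mul_self (norm_nonneg (g ω)) h1,
        sq_nonneg (‖gradient f x‖ - ‖gradient f x - g ω‖)]
  have hrb : ∀ ω, ‖yplus ω - x‖ ≤ η*‖g ω‖ + (η*‖g ω₀‖ + ‖yplus ω₀ - x‖) := by
    intro ω
    have htr : ‖yplus ω - x‖ ≤ ‖yplus ω - yplus ω₀‖ + ‖yplus ω₀ - x‖ := by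
      have h1 := dist_triangle (yplus ω) (yplus ω₀) x
      simpa [dist_eq_norm] using h1
    have h2 := hne ω ω₀
    have h3 := norm_sub_le (g ω) (g ω₀)
    nlinarith [hη0.le]
  have hrmeas : AEStronglyMeasurable (fun ω => yplus ω - x) (volume : Measure Ω) :=
    hymeas.sub aestronglyMeasurable_const
  have hrint : Integrable (fun ω => yplus ω - x) := by
    apply Integrable.mono' ((hgnorm.const_mul η).add
      (integrable_const (η*‖g ω₀‖ + ‖yplus ω₀ - x‖))) hrmeas
    filter_upwards with ω
    exact hrb ω
  have hrsqmeas : AEStronglyMeasurable (fun ω => ‖yplus ω - x‖ ^ 2) (volume : Measure Ω) :=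
    ((continuous_norm.pow 2)).comp_aestronglyMeasurable hrmeas
  have hrsqint : Integrable (fun ω => ‖yplus ω - x‖ ^ 2) := by
    apply Integrable.mono' ((hgsqint.const_mul (2*η^2)).add
      (integrable_const (2*(η*‖g ω₀‖ + ‖yplus ω₀ - x‖)^2))) hrsqmeas
    filter_upwards with ω
    rw [Real.norm_eq_abs, abs_of_nonneg (by positivity)]
    simp only [Pi.add_apply]
    nlinarith [hrb ω, norm_nonneg (yplus ω - x), norm_nonneg (g ω), hη0.le,
      sq_nonneg (η*‖g ω‖ - (η*‖g ω₀‖ + ‖yplus ω₀ - x‖)),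
      mul_nonneg (norm_nonneg (yplus ω - x)) (norm_nonneg (g ω))]
  have hinner_r_int : Integrable (fun ω => ⟪yplus ω - x, u - x⟫) := by
    apply Integrable.mono' (hrint.norm.const_mul ‖u - x‖)
    · exact ((continuous_id.inner continuous_const)).comp_aestronglyMeasurable hrmeas
    · filter_upwards with ω
      rw [Real.norm_eq_abs]
      calc |⟪yplus ω - x, u - x⟫| ≤ ‖yplus ω - x‖ * ‖u - x‖ := abs_real_inner_le_norm _ _
        _ = ‖u - x‖ * ‖yplus ω - x‖ := mul_comm _ _
  have heint : Integrable (fun ω => gradient f x - g ω) := (integrable_const _).sub hgint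
  have heinner_int : Integrable (fun ω => ⟪gradient f x - g ω, u - x⟫) := by
    apply Integrable.mono' (heint.norm.const_mul ‖u - x‖)
    · exact ((continuous_id.inner continuous_const)).comp_aestronglyMeasurable
        heint.aestronglyMeasurable
    · filter_upwards with ω
      rw [Real.norm_eq_abs]
      calc |⟪gradient f x - g ω, u - x⟫| ≤ ‖gradient f x - g ω‖ * ‖u - x‖ :=
            abs_real_inner_le_norm _ _
        _ = ‖u - x‖ * ‖gradient f x - g ω‖ := mul_comm _ _
  have hinteg0 : ∫ ω, ⟪gradient f x - g ω, u - x⟫ = 0 := by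
    have h1 : (∫ ω, (gradient f x - g ω)) = 0 := by
      rw [integral_sub (integrable_const _) hgint, integral_const, probReal_univ,
        one_smul, hgmean, sub_self]
    calc ∫ ω, ⟪gradient f x - g ω, u - x⟫
        = ∫ ω, ⟪u - x, gradient f x - g ω⟫ := by
          congr 1; funext ω; rw [real_inner_comm]
      _ = ⟪u - x, ∫ ω, (gradient f x - g ω)⟫ := integral_inner heint (u - x)
      _ = 0 := by rw [h1, inner_zero_right]
  -- continuity of P
  have hψcont : Continuous ψ := by
    have h1 := ConvexOn.continuousOn isOpen_univ hψ
    rw [← continuousOn_univ]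
    exact h1
  have hPcont : Continuous P := by
    have hPfun : P = fun z => f z + ψ z := funext hP
    rw [hPfun]
    exact hdf.continuous.add hψcont
  have hPymeas : AEStronglyMeasurable (fun ω => P (yplus ω)) (volume : Measure Ω) :=
    hPcont.comp_aestronglyMeasurable hymeas
  -- pointwise key inequality
  have key : ∀ ω, P (yplus ω) ≤ P u - M - ⟪gradient f x - g ω, u - x⟫
      + (1/η) * ⟪yplus ω - x, u - x⟫
      + η/2 * ‖gradient f x - g ω‖ ^ 2 - 1/(4*η) * ‖yplus ω - x‖ ^ 2 := by
    intro ω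
    have hηΔ : η • Δ ω = -(yplus ω - x) - η • g ω := by
      rw [hyp ω]
      abel
    have hq : η * ⟪Δ ω, u - yplus ω⟫ = -⟪yplus ω - x, u - x⟫ + ‖yplus ω - x‖ ^ 2
        - η * ⟪g ω, u - x⟫ + η * ⟪g ω, yplus ω - x⟫ := by
      have h1 : u - yplus ω = (u - x) - (yplus ω - x) := by abel
      rw [← real_inner_smul_left, hηΔ, h1]
      generalize yplus ω - x = A
      generalize u - x = B
      generalize g ω = C
      simp only [inner_sub_left, inner_sub_right, inner_neg_left, real_inner_smul_left,
        real_inner_self_eq_norm_sq]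
      ring
    have F1 : ψ (yplus ω) ≤ ψ u - ⟪Δ ω, u - yplus ω⟫ := by linarith [hΔ ω u]
    have F2 : f (yplus ω) ≤ f x + ⟪gradient f x, yplus ω - x⟫ + L/2 * ‖yplus ω - x‖ ^ 2 := by
      have h1 := aux_descent hdf hL.le hflip x (yplus ω)
      linarith [h1]
    have F3 : f x + ⟪gradient f x, u - x⟫ + M ≤ f u := by linarith [hmax]
    have F5b : ⟪gradient f x - g ω, yplus ω - x⟫
        = ⟪gradient f x, yplus ω - x⟫ - ⟪g ω, yplus ω - x⟫ := inner_sub_left _ _ _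
    have F6 : ⟪gradient f x - g ω, u - x⟫
        = ⟪gradient f x, u - x⟫ - ⟪g ω, u - x⟫ := inner_sub_left _ _ _
    have F5 : 2*η*⟪gradient f x - g ω, yplus ω - x⟫
        ≤ η^2 * ‖gradient f x - g ω‖ ^ 2 + ‖yplus ω - x‖ ^ 2 := by
      have hcs := real_inner_le_norm (gradient f x - g ω) (yplus ω - x)
      nlinarith [sq_nonneg (η*‖gradient f x - g ω‖ - ‖yplus ω - x‖), hη0.le]
    -- multiply the target by η
    rw [hP (yplus ω), hP u]
    have Hη : η * (f (yplus ω) + ψ (yplus ω))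
        ≤ η * ((f u + ψ u) - M - ⟪gradient f x - g ω, u - x⟫)
          + ⟪yplus ω - x, u - x⟫ + η^2/2 * ‖gradient f x - g ω‖ ^ 2
          - ‖yplus ω - x‖ ^ 2 / 4 := by
      nlinarith [mul_le_mul_of_nonneg_left F1 hη0.le, mul_le_mul_of_nonneg_left F2 hη0.le,
        mul_le_mul_of_nonneg_left F3 hη0.le, hq, F5, F5b, F6,
        mul_le_mul_of_nonneg_right h2Lη (sq_nonneg ‖yplus ω - x‖)]
    have hT : η * ((f u + ψ u) - M - ⟪gradient f x - g ω, u - x⟫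
          + (1/η) * ⟪yplus ω - x, u - x⟫
          + η/2 * ‖gradient f x - g ω‖ ^ 2 - 1/(4*η) * ‖yplus ω - x‖ ^ 2)
        = η * ((f u + ψ u) - M - ⟪gradient f x - g ω, u - x⟫)
          + ⟪yplus ω - x, u - x⟫ + η^2/2 * ‖gradient f x - g ω‖ ^ 2
          - ‖yplus ω - x‖ ^ 2 / 4 := by
      field_simp
    have := hT ▸ Hη
    exact (mul_le_mul_iff_right₀ hη0).mp this
  -- integrability of the majorant
  have hRHSint : Integrable (fun ω => P u - M - ⟪gradient f x - g ω, u - x⟫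
      + (1/η) * ⟪yplus ω - x, u - x⟫
      + η/2 * ‖gradient f x - g ω‖ ^ 2 - 1/(4*η) * ‖yplus ω - x‖ ^ 2) := by
    exact ((((integrable_const (P u - M)).sub heinner_int).add
      (hinner_r_int.const_mul (1/η))).add (hgsq.const_mul (η/2))).sub
      (hrsqint.const_mul (1/(4*η)))
  have hc1 : Integrable (fun ω => (1/η) * ⟪yplus ω - x, u - x⟫) :=
    hinner_r_int.const_mul _
  have hc2 : Integrable (fun ω => η/2 * ‖gradient f x - g ω‖ ^ 2) := hgsq.const_mul _
  have hc3 : Integrable (fun ω => 1/(4*η) * ‖yplus ω - x‖ ^ 2) := hrsqint.const_mul _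
  have hI1' : Integrable (fun ω => P u - M - ⟪gradient f x - g ω, u - x⟫) :=
    (integrable_const (P u - M)).sub heinner_int
  have hI2' : Integrable (fun ω => P u - M - ⟪gradient f x - g ω, u - x⟫
      + (1/η) * ⟪yplus ω - x, u - x⟫) := hI1'.add hc1
  have hI3' : Integrable (fun ω => P u - M - ⟪gradient f x - g ω, u - x⟫
      + (1/η) * ⟪yplus ω - x, u - x⟫ + η/2 * ‖gradient f x - g ω‖ ^ 2) := hI2'.add hc2
  have hRHSval : (∫ ω, (P u - M - ⟪gradient f x - g ω, u - x⟫
      + (1/η) * ⟪yplus ω - x, u - x⟫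
      + η/2 * ‖gradient f x - g ω‖ ^ 2 - 1/(4*η) * ‖yplus ω - x‖ ^ 2))
      = P u - M - 0 + (1/η) * (∫ ω, ⟪yplus ω - x, u - x⟫)
        + η/2 * (∫ ω, ‖gradient f x - g ω‖ ^ 2)
        - 1/(4*η) * (∫ ω, ‖yplus ω - x‖ ^ 2) := by
    rw [integral_sub hI3' hc3, integral_add hI2' hc2, integral_add hI1' hc1,
      integral_sub (integrable_const (P u - M)) heinner_int,
      integral_const_mul, integral_const_mul, integral_const_mul,
      integral_const, probReal_univ, one_smul, hinteg0]
  -- lower bound to get integrability of P ∘ yplus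
  have hlow : ∀ ω, f x - ‖gradient f x‖ * ‖yplus ω - x‖
      + (ψ (yplus ω₀) - ‖Δ ω₀‖ * (‖yplus ω - x‖ + ‖yplus ω₀ - x‖)) ≤ P (yplus ω) := by
    intro ω
    rw [hP]
    have h1 : f x + ⟪gradient f x, yplus ω - x⟫ ≤ f (yplus ω) := by
      have h2 := hsc (yplus ω) x
      nlinarith [mul_nonneg hμ (sq_nonneg ‖yplus ω - x‖)]
    have h3 : -(‖gradient f x‖ * ‖yplus ω - x‖) ≤ ⟪gradient f x, yplus ω - x⟫ := by
      have ha := abs_real_inner_le_norm (gradient f x) (yplus ω - x)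
      have hb := neg_abs_le ⟪gradient f x, yplus ω - x⟫
      linarith
    have h2 := hΔ ω₀ (yplus ω)
    have h4 : -(‖Δ ω₀‖ * (‖yplus ω - x‖ + ‖yplus ω₀ - x‖)) ≤ ⟪Δ ω₀, yplus ω - yplus ω₀⟫ := by
      have ha := abs_real_inner_le_norm (Δ ω₀) (yplus ω - yplus ω₀)
      have hb := neg_abs_le ⟪Δ ω₀, yplus ω - yplus ω₀⟫
      have hc : ‖yplus ω - yplus ω₀‖ ≤ ‖yplus ω - x‖ + ‖yplus ω₀ - x‖ := by
        calc ‖yplus ω - yplus ω₀‖ = ‖(yplus ω - x) + (x - yplus ω₀)‖ := by congr 1; abel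
          _ ≤ ‖yplus ω - x‖ + ‖x - yplus ω₀‖ := norm_add_le _ _
          _ = ‖yplus ω - x‖ + ‖yplus ω₀ - x‖ := by rw [norm_sub_rev x (yplus ω₀)]
      nlinarith [norm_nonneg (Δ ω₀)]
    linarith
  have hlowint : Integrable (fun ω => f x - ‖gradient f x‖ * ‖yplus ω - x‖
      + (ψ (yplus ω₀) - ‖Δ ω₀‖ * (‖yplus ω - x‖ + ‖yplus ω₀ - x‖))) := by
    exact ((integrable_const (f x)).sub (hrint.norm.const_mul ‖gradient f x‖)).add
      ((integrable_const (ψ (yplus ω₀))).sub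
        ((hrint.norm.add (integrable_const ‖yplus ω₀ - x‖)).const_mul ‖Δ ω₀‖))
  have hPyint : Integrable (fun ω => P (yplus ω)) := by
    apply Integrable.mono' (hRHSint.abs.add hlowint.abs) hPymeas
    filter_upwards with ω
    rw [Real.norm_eq_abs, abs_le]
    have h1 := hlow ω
    have h1' := key ω
    have h2 := neg_abs_le (f x - ‖gradient f x‖ * ‖yplus ω - x‖
      + (ψ (yplus ω₀) - ‖Δ ω₀‖ * (‖yplus ω - x‖ + ‖yplus ω₀ - x‖)))
    have h2' := le_abs_self (P u - M - ⟪gradient f x - g ω, u - x⟫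
      + (1/η) * ⟪yplus ω - x, u - x⟫
      + η/2 * ‖gradient f x - g ω‖ ^ 2 - 1/(4*η) * ‖yplus ω - x‖ ^ 2)
    have h3 := abs_nonneg (P u - M - ⟪gradient f x - g ω, u - x⟫
      + (1/η) * ⟪yplus ω - x, u - x⟫
      + η/2 * ‖gradient f x - g ω‖ ^ 2 - 1/(4*η) * ‖yplus ω - x‖ ^ 2)
    have h3' := abs_nonneg (f x - ‖gradient f x‖ * ‖yplus ω - x‖
      + (ψ (yplus ω₀) - ‖Δ ω₀‖ * (‖yplus ω - x‖ + ‖yplus ω₀ - x‖)))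
    constructor
    · simp only [Pi.add_apply]
      linarith
    · simp only [Pi.add_apply]
      linarith
  -- conclude
  have hmono := integral_mono hPyint hRHSint (fun ω => key ω)
  rw [hRHSval] at hmono
  have hflipint : (∫ ω, ⟪x - yplus ω, u - x⟫) = - ∫ ω, ⟪yplus ω - x, u - x⟫ := by
    rw [← integral_neg]
    congr 1
    funext ω
    rw [← inner_neg_left]
    congr 1
    abel
  rw [hflipint]
  linarith [hmono]
end
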